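/- For real numbers $a_1, a_2 > 0$ and integers $n \geq 3$, $0 \leq m \leq n$, define $f_{(n,m)}(x) = \frac{x^n+1}{x^{n-m}+x^m}$. Then $f_{(n,m)}(a_1) = f_{(n,m)}(a_2)$ holds for all such pairs $(n,m)$ if and only if $a_1 = a_2$ or $a_1 a_2 = 1$. -/
import Mathlib

theorem stmt_0 (a₁ a₂ : ℝ) (h₁ : 0 < a₁) (h₂ : 0 < a₂) :
    (∀ n m : ℕ, 3 ≤ n → m ≤ n →
      (a₁ ^ n + 1) / (a₁ ^ (n - m) + a₁ ^ m) = (a₂ ^ n + 1) / (a₂ ^ (n - m) + a₂ ^ m))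
    ↔ (a₁ = a₂ ∨ a₁ * a₂ = 1) := by
  constructor
  · intro h
    have h31 := h 3 1 (by norm_num) (by norm_num)
    norm_num at h31
    have d1 : (0:ℝ) < a₁ ^ 2 + a₁ := by positivity
    have d2 : (0:ℝ) < a₂ ^ 2 + a₂ := by positivity
    rw [div_eq_div_iff d1.ne' d2.ne'] at h31
    have key : (a₁ - a₂) * (a₁ * a₂ - 1) = 0 := by nlinarith [h31, mul_pos h₁ h₂]
    rcases mul_eq_zero.1 key with h | h
    · left; linarith
    · right; linarith
  · rintro (rfl | hinv)
    · intro n m _ _; rfl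
    · intro n m hn hmn
      have ha : a₁ ≠ 0 := h₁.ne'
      have h2 : a₂ = a₁⁻¹ := by field_simp at hinv ⊢; linarith [hinv]
      subst h2
      rw [div_eq_div_iff (by positivity) (by positivity)]
      rw [inv_pow, inv_pow, inv_pow]
      have e1 : a₁ ^ (n - m) * a₁ ^ m = a₁ ^ n := by
        rw [← pow_add, Nat.sub_add_cancel hmn]
      field_simp
      rw [e1]; ring
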